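/- arXiv:1106.5410 — 2 statements merged into one kernel-verified Lean document; each statement's English description precedes it below -/
import Mathlib

section
/- For the D_3 minimal puncture, the Higgs field φ(y) = X/y + M with X the nilpotent element X⁻₁,₂ in so(6) and M a generic element of so(6) yields characteristic polynomial coefficients satisfying φ₂ = 2a/y + O(1) and φ₄ = a²/y² + O(y⁻¹) for some a depending on M, so that the leading pole coefficients obey c⁽⁴⁾₂ = (1/4)(c⁽²⁾₁)². -/
open Polynomial

/-- The symmetric form J = ((0,1₃),(1₃,0)) defining so(6). -/
def J6 : Matrix (Fin 6) (Fin 6) ℂ :=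
  fun i j => if i.val + 3 = j.val ∨ j.val + 3 = i.val then 1 else 0

/-- The nilpotent X⁻₁,₂ = E₁,₂ − E₅,₄ (0-based entries (0,1) and (4,3)). -/
def Xmin12 : Matrix (Fin 6) (Fin 6) ℂ :=
  Matrix.single 0 1 1 - Matrix.single 4 3 1

/-- y·φ(y) = X + y·M, as a matrix of polynomials in y. -/
noncomputable def higgsNum (M : Matrix (Fin 6) (Fin 6) ℂ) : Matrix (Fin 6) (Fin 6) (Polynomial ℂ) :=
  Xmin12.map C + (X : Polynomial ℂ) • M.map C

open Matrix

set_option maxHeartbeats 1000000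
set_option synthInstance.maxHeartbeats 400000
set_option maxRecDepth 2000

lemma trace_map' {n R S : Type*} [Fintype n] [CommRing R] [CommRing S]
    (A : Matrix n n R) (f : R →+* S) : Matrix.trace (A.map f) = f (Matrix.trace A) := by
  simp [Matrix.trace, Matrix.diag, Matrix.map_apply, map_sum]

lemma coeff_comp_neg_X {R : Type*} [CommRing R] (p : R[X]) (k : ℕ) :
    (p.comp (-X)).coeff k = (-1)^k * p.coeff k := by
  induction p using Polynomial.induction_on' with
  | add p q hp hq => simp [add_comp, hp, hq]; ring
  | monomial n a =>
    rw [← C_mul_X_pow_eq_monomial, mul_comp, C_comp, pow_comp, X_comp, neg_pow]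
    rw [show ((-1 : R[X])) = C (-1) by simp, ← C_pow, ← mul_assoc, ← C_mul]
    rw [coeff_C_mul, coeff_C_mul, coeff_X_pow]
    rcases eq_or_ne n k with h | h
    · subst h; simp; ring
    · simp [h, Ne.symm h]

variable {n : Type*} [DecidableEq n] [Fintype n] {R : Type*} [CommRing R]

lemma coeff_zero_det_one_add (W : Matrix n n R) :
    (Matrix.det (1 + (X : R[X]) • W.map C)).coeff 0 = 1 := by
  rw [coeff_zero_eq_eval_zero, eval_det_add_X_smul 1 W, det_one, eval_one]

lemma coeff_two_det_one_add (W : Matrix n n R) :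
    2 * (Matrix.det (1 + (X : R[X]) • W.map C)).coeff 2 =
      (Matrix.trace W)^2 - Matrix.trace (W * W) := by
  have hmapneg : (-W).map (C : R → R[X]) = -(W.map C) := by
    ext i j; simp [Matrix.map_apply]
  set P := Matrix.det (1 + (X : R[X]) • W.map C) with hP
  set Pm := Matrix.det (1 + (X : R[X]) • (-W).map C) with hPm
  -- Pm = P.comp (-X)
  have hcomp : Pm = P.comp (-X) := by
    have key : P.comp (-X) =
        Matrix.det ((Polynomial.eval₂RingHom (C : R →+* R[X]) (-X)).mapMatrix
          (1 + (X : R[X]) • W.map C)) := by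
      rw [← RingHom.map_det]
      rfl
    rw [key, hPm]
    congr 1
    ext i j
    simp [RingHom.mapMatrix_apply, Matrix.map_apply, Matrix.add_apply, Matrix.smul_apply,
      Matrix.one_apply, hmapneg, smul_eq_mul,
      apply_ite (Polynomial.eval₂ (C : R →+* R[X]) (-X))]
  have hc2 : Pm.coeff 2 = P.coeff 2 := by
    rw [hcomp, coeff_comp_neg_X]; ring
  have hP0 : P.coeff 0 = 1 := coeff_zero_det_one_add W
  have hPm0 : Pm.coeff 0 = 1 := coeff_zero_det_one_add (-W)
  have hP1 : P.coeff 1 = Matrix.trace W := Matrix.coeff_det_one_add_X_smul_one W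
  have hPm1 : Pm.coeff 1 = -Matrix.trace W := by
    rw [hPm, Matrix.coeff_det_one_add_X_smul_one, Matrix.trace_neg]
  -- product identity
  have hmul : P * Pm = Matrix.det (1 + (X^2 : R[X]) • ((-(W*W)).map C)) := by
    rw [hP, hPm, ← Matrix.det_mul]
    congr 1
    have hWW : ((-(W*W)).map (C : R → R[X])) = -((W.map C) * (W.map C)) := by
      rw [show -(W*W) = (-W) * W from (neg_mul W W).symm, Matrix.map_mul, hmapneg, neg_mul]
    have ha : ((X : R[X]) • W.map C) * ((X : R[X]) • W.map C)
        = (X^2 : R[X]) • ((W.map C) * (W.map C)) := by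
      rw [Matrix.smul_mul, Matrix.mul_smul, smul_smul, pow_two]
    rw [hWW, hmapneg, smul_neg, smul_neg, ← ha]
    generalize (X:R[X]) • W.map (C : R → R[X]) = a
    noncomm_ring
  have htr : Matrix.trace (((-(W*W))).map (C : R → R[X])) = C (-(Matrix.trace (W*W))) := by
    rw [trace_map' (-(W*W)) (C : R →+* R[X]), Matrix.trace_neg]
  have hcoeff2rhs : (Matrix.det (1 + (X^2 : R[X]) • ((-(W*W)).map C))).coeff 2
      = -(Matrix.trace (W*W)) := by
    rw [Matrix.det_one_add_smul (X^2 : R[X]) ((-(W*W)).map C), htr]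
    rw [show ((X^2 : R[X])^2) = X^4 by ring]
    simp [coeff_add, coeff_one, coeff_C_mul, coeff_X_pow, Polynomial.coeff_mul_X_pow']
  have hmulcoeff : (P * Pm).coeff 2 =
      P.coeff 0 * Pm.coeff 2 + P.coeff 1 * Pm.coeff 1 + P.coeff 2 * Pm.coeff 0 := by
    rw [Polynomial.coeff_mul, Finset.Nat.sum_antidiagonal_eq_sum_range_succ_mk]
    simp [Finset.sum_range_succ]
    try ring
  rw [hmul, hcoeff2rhs] at hmulcoeff
  rw [hP0, hPm0, hP1, hPm1, hc2] at hmulcoeff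
  linear_combination -hmulcoeff




lemma Xmin12_sq : Xmin12 * Xmin12 = 0 := by
  ext i j
  simp [Xmin12, Matrix.mul_apply, Matrix.sub_apply, Matrix.single, Fin.sum_univ_six,
    Matrix.of_apply]

lemma charpoly_Xmin12 : Xmin12.charpoly = X^6 := by
  have hn : IsNilpotent Xmin12 := ⟨2, by rw [pow_two, Xmin12_sq]⟩
  have h := Matrix.isNilpotent_charpoly_sub_pow_of_isNilpotent hn
  have h6 : Fintype.card (Fin 6) = 6 := by simp
  rw [h6] at h
  have := h.eq_zero
  linear_combination this

-- swap ring homs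
noncomputable def gSwap : Polynomial ℂ →+* (Polynomial ℂ)[X] :=
  eval₂RingHom ((C : Polynomial ℂ →+* (Polynomial ℂ)[X]).comp (C : ℂ →+* Polynomial ℂ)) X

noncomputable def PhiSwap : (Polynomial ℂ)[X] →+* (Polynomial ℂ)[X] :=
  eval₂RingHom gSwap (C X)

lemma gSwap_coeff (a : Polynomial ℂ) (l : ℕ) : (gSwap a).coeff l = C (a.coeff l) := by
  induction a using Polynomial.induction_on' with
  | add p q hp hq => simp [hp, hq]
  | monomial m c =>
    rw [gSwap, coe_eval₂RingHom, eval₂_monomial]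
    simp only [RingHom.comp_apply, coeff_monomial]
    rw [coeff_C_mul, coeff_X_pow]
    rcases eq_or_ne m l with h | h
    · subst h; simp
    · simp [h, Ne.symm h]

lemma PhiSwap_coeff (p : (Polynomial ℂ)[X]) (k l : ℕ) :
    ((PhiSwap p).coeff l).coeff k = (p.coeff k).coeff l := by
  induction p using Polynomial.induction_on' with
  | add p q hp hq => simp [hp, hq]
  | monomial m c =>
    rw [PhiSwap, coe_eval₂RingHom, eval₂_monomial, ← C_pow, coeff_mul_C, gSwap_coeff,
      coeff_C_mul, coeff_X_pow, coeff_monomial]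
    rcases eq_or_ne m k with h | h
    · subst h; simp
    · simp [h, Ne.symm h]






noncomputable def A0 : Matrix (Fin 6) (Fin 6) (Polynomial ℂ) := Matrix.charmatrix Xmin12

noncomputable def Bm (M : Matrix (Fin 6) (Fin 6) ℂ) : Matrix (Fin 6) (Fin 6) (Polynomial ℂ) :=
  -(M.map (C : ℂ → Polynomial ℂ))

noncomputable def Fdet (M : Matrix (Fin 6) (Fin 6) ℂ) : (Polynomial ℂ)[X] :=
  Matrix.det (A0.map C + (X : (Polynomial ℂ)[X]) • (Bm M).map C)

lemma Phi_charpoly (M : Matrix (Fin 6) (Fin 6) ℂ) :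
    PhiSwap ((higgsNum M).charpoly) = Fdet M := by
  rw [Matrix.charpoly, RingHom.map_det, Fdet]
  congr 1
  refine Matrix.ext fun i j => ?_
  rw [RingHom.mapMatrix_apply, Matrix.map_apply]
  rcases eq_or_ne i j with h | h
  · subst h
    rw [Matrix.charmatrix_apply_eq]
    simp [PhiSwap, gSwap, coe_eval₂RingHom, eval₂_sub, eval₂_mul, eval₂_neg,
      higgsNum, A0, Bm, Matrix.map_apply, Matrix.add_apply,
      Matrix.smul_apply, smul_eq_mul, Matrix.charmatrix_apply_eq, Matrix.neg_apply]
    ring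
  · rw [Matrix.charmatrix_apply_ne _ _ _ h]
    simp [PhiSwap, gSwap, coe_eval₂RingHom, eval₂_sub, eval₂_mul, eval₂_neg,
      higgsNum, A0, Bm, Matrix.map_apply, Matrix.add_apply,
      Matrix.smul_apply, smul_eq_mul, Matrix.charmatrix_apply_ne _ _ _ h, Matrix.neg_apply]
    ring

noncomputable def phiK : Polynomial ℂ →+* RatFunc ℂ := algebraMap _ _
noncomputable def iotaK : ℂ →+* RatFunc ℂ := phiK.comp C

lemma phiK_C (c : ℂ) : phiK (C c) = iotaK c := rfl

lemma trace_map'' {n R S : Type*} [Fintype n] [CommRing R] [CommRing S]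
    (A : Matrix n n R) (f : R →+* S) : Matrix.trace (A.map f) = f (Matrix.trace A) := by
  simp [Matrix.trace, Matrix.diag, Matrix.map_apply, map_sum]

lemma phiK_inj : Function.Injective phiK := IsFractionRing.injective _ _

lemma hu_ne : phiK X ≠ 0 := by
  intro h
  have := phiK_inj (h.trans (map_zero phiK).symm)
  exact X_ne_zero this

lemma Fdet_coeffs (M : Matrix (Fin 6) (Fin 6) ℂ) :
    (Fdet M).coeff 0 = X^6 ∧
    (Fdet M).coeff 1 = -(C (Matrix.trace M) * X^5) - C (Matrix.trace (Xmin12 * M)) * X^4 ∧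
    2 * (Fdet M).coeff 2 =
      C ((Matrix.trace M)^2 - Matrix.trace (M*M)) * X^4
      + C (2*(Matrix.trace M * Matrix.trace (Xmin12*M)) - 2*Matrix.trace (Xmin12*M*M)) * X^3
      + C ((Matrix.trace (Xmin12*M))^2
            - Matrix.trace ((Xmin12*M)*(Xmin12*M))) * X^2 := by
  set u : RatFunc ℂ := phiK X with hudef
  have hu : u ≠ 0 := hu_ne
  set XK : Matrix (Fin 6) (Fin 6) (RatFunc ℂ) := Xmin12.map iotaK with hXK
  set MK : Matrix (Fin 6) (Fin 6) (RatFunc ℂ) := M.map iotaK with hMK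
  have hA0K : A0.map phiK = u • 1 - XK := by
    refine Matrix.ext fun i j => ?_
    rcases eq_or_ne i j with h | h
    · subst h
      simp [A0, hXK, Matrix.map_apply, Matrix.charmatrix_apply_eq, Matrix.sub_apply,
        Matrix.smul_apply, Matrix.one_apply, phiK_C, smul_eq_mul, hudef]
    · simp [A0, hXK, Matrix.map_apply, Matrix.charmatrix_apply_ne _ _ _ h, Matrix.sub_apply,
        Matrix.smul_apply, Matrix.one_apply, h, phiK_C, smul_eq_mul]
  have hXK2 : XK * XK = 0 := by
    rw [hXK, ← Matrix.map_mul, Xmin12_sq]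
    ext i j
    simp [Matrix.map_apply]
  set W : Matrix (Fin 6) (Fin 6) (RatFunc ℂ) :=
    -((u⁻¹ • MK) + (u⁻¹*u⁻¹) • (XK * MK)) with hW
  have hXK2' : XK * (XK * MK) = 0 := by
    rw [← Matrix.mul_assoc, hXK2, Matrix.zero_mul]
  have hA0W : (u • 1 - XK) * W = -MK := by
    rw [hW, Matrix.mul_neg]
    congr 1
    simp only [Matrix.sub_mul, Matrix.mul_add, Matrix.smul_mul, Matrix.mul_smul,
      Matrix.one_mul, smul_smul, hXK2', smul_zero, smul_sub, sub_zero]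
    rw [inv_mul_cancel₀ hu, one_smul, show u⁻¹ * u⁻¹ * u = u⁻¹ by field_simp]
    abel
  have hfac : (A0.map phiK).map C + (X : (RatFunc ℂ)[X]) • ((-MK).map C)
      = ((u•1 - XK).map C) * (1 + (X:(RatFunc ℂ)[X]) • W.map C) := by
    rw [hA0K, Matrix.mul_add, Matrix.mul_one]
    congr 1
    rw [Matrix.mul_smul, ← Matrix.map_mul, hA0W]
  have hmapmat : (mapRingHom phiK).mapMatrix (A0.map C + (X:(Polynomial ℂ)[X]) • (Bm M).map C)
      = (A0.map phiK).map C + (X:(RatFunc ℂ)[X]) • ((-MK).map C) := by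
    refine Matrix.ext fun i j => ?_
    simp [RingHom.mapMatrix_apply, Matrix.map_apply, Matrix.add_apply, Matrix.smul_apply,
      Matrix.neg_apply, Bm, smul_eq_mul, phiK_C, hMK]
  have hmapF : (mapRingHom phiK) (Fdet M)
      = C (u^6) * Matrix.det (1 + (X:(RatFunc ℂ)[X]) • W.map C) := by
    rw [Fdet, RingHom.map_det, hmapmat, hfac, Matrix.det_mul]
    refine congrArg (· * _) ?_
    have e : ((u•1 - XK).map (C : RatFunc ℂ → (RatFunc ℂ)[X])).det = C ((u•1 - XK).det) := by
      rw [← RingHom.mapMatrix_apply, ← RingHom.map_det]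
    rw [e]
    congr 1
    rw [← hA0K]
    have e2 : (A0.map (phiK : Polynomial ℂ → RatFunc ℂ)).det = phiK A0.det := by
      rw [← RingHom.mapMatrix_apply, ← RingHom.map_det]
    rw [e2]
    have e3 : A0.det = Xmin12.charpoly := by simp only [A0, Matrix.charpoly]
    rw [e3, charpoly_Xmin12, map_pow]
  -- trace computations
  have htrMK : Matrix.trace MK = iotaK (Matrix.trace M) := trace_map'' M iotaK
  have htrXM : Matrix.trace (XK * MK) = iotaK (Matrix.trace (Xmin12 * M)) := by
    rw [hXK, hMK, ← Matrix.map_mul, trace_map'']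
  have htrW : Matrix.trace W
      = -(u⁻¹ * iotaK (Matrix.trace M) + (u⁻¹*u⁻¹) * iotaK (Matrix.trace (Xmin12*M))) := by
    rw [hW, Matrix.trace_neg, Matrix.trace_add, Matrix.trace_smul, Matrix.trace_smul,
      htrMK, htrXM, smul_eq_mul, smul_eq_mul]
  have htrWW : Matrix.trace (W * W)
      = (u⁻¹*u⁻¹) * iotaK (Matrix.trace (M*M))
        + 2*(u⁻¹*u⁻¹*u⁻¹) * iotaK (Matrix.trace (Xmin12*M*M))
        + (u⁻¹*u⁻¹*u⁻¹*u⁻¹) * iotaK (Matrix.trace ((Xmin12*M)*(Xmin12*M))) := by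
    rw [hW, Matrix.neg_mul, Matrix.mul_neg, neg_neg]
    rw [Matrix.mul_add, Matrix.add_mul, Matrix.add_mul]
    rw [Matrix.trace_add, Matrix.trace_add, Matrix.trace_add]
    rw [Matrix.smul_mul, Matrix.smul_mul, Matrix.smul_mul, Matrix.smul_mul]
    rw [Matrix.mul_smul, Matrix.mul_smul, Matrix.mul_smul, Matrix.mul_smul]
    rw [smul_smul, smul_smul, smul_smul, smul_smul]
    rw [Matrix.trace_smul, Matrix.trace_smul, Matrix.trace_smul, Matrix.trace_smul]
    have e1 : Matrix.trace (MK * MK) = iotaK (Matrix.trace (M * M)) := by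
      rw [hMK, ← Matrix.map_mul, trace_map'']
    have e2 : Matrix.trace (MK * (XK * MK)) = iotaK (Matrix.trace (Xmin12*M*M)) := by
      rw [Matrix.trace_mul_comm, Matrix.mul_assoc, ← Matrix.mul_assoc]
      rw [hXK, hMK, ← Matrix.map_mul, ← Matrix.map_mul, trace_map'']
    have e3 : Matrix.trace ((XK * MK) * MK) = iotaK (Matrix.trace (Xmin12*M*M)) := by
      rw [hXK, hMK, ← Matrix.map_mul, ← Matrix.map_mul, trace_map'']
    have e4 : Matrix.trace ((XK * MK) * (XK * MK))
        = iotaK (Matrix.trace ((Xmin12*M)*(Xmin12*M))) := by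
      rw [hXK, hMK, ← Matrix.map_mul, ← Matrix.map_mul, trace_map'']
    rw [e1, e2, e3, e4, smul_eq_mul, smul_eq_mul, smul_eq_mul, smul_eq_mul]
    ring
  -- coefficient extraction
  have hco : ∀ l : ℕ, phiK ((Fdet M).coeff l)
      = u^6 * (Matrix.det (1 + (X:(RatFunc ℂ)[X]) • W.map C)).coeff l := by
    intro l
    rw [← Polynomial.coeff_map, ← Polynomial.coe_mapRingHom, hmapF, coeff_C_mul]
  have hD0 := coeff_zero_det_one_add W
  have hD1 := Matrix.coeff_det_one_add_X_smul_one W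
  have hD2 := coeff_two_det_one_add W
  refine ⟨?_, ?_, ?_⟩
  · apply phiK_inj
    rw [hco 0, hD0, map_pow, mul_one]
  · apply phiK_inj
    rw [hco 1, hD1, htrW]
    simp only [map_sub, map_add, map_neg, _root_.map_mul, map_pow, phiK_C, map_ofNat]
    field_simp
    ring
  · apply phiK_inj
    rw [_root_.map_mul, hco 2, show phiK 2 = 2 from map_ofNat phiK 2, ← mul_assoc,
      mul_comm (2 : RatFunc ℂ) (u^6), mul_assoc, hD2, htrW, htrWW]
    simp only [map_sub, map_add, map_neg, _root_.map_mul, map_pow, phiK_C, map_ofNat]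
    have h9 : (u⁻¹)^9 * u^9 = 1 := by rw [← mul_pow, inv_mul_cancel₀ hu, one_pow]
    field_simp
    ring


lemma traceXM (M : Matrix (Fin 6) (Fin 6) ℂ) :
    Matrix.trace (Xmin12 * M) = M 1 0 - M 3 4 := by
  simp [Matrix.trace, Matrix.diag, Matrix.mul_apply, Fin.sum_univ_six, Xmin12,
    Matrix.single, Matrix.sub_apply, Matrix.of_apply]
  ring

lemma traceXMXM (M : Matrix (Fin 6) (Fin 6) ℂ) :
    Matrix.trace (Xmin12 * M * (Xmin12 * M))
      = (M 1 0)^2 - 2*(M 1 4)*(M 3 0) + (M 3 4)^2 := by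
  simp [Matrix.trace, Matrix.diag, Matrix.mul_apply, Fin.sum_univ_six, Xmin12,
    Matrix.single, Matrix.sub_apply, Matrix.of_apply]
  ring

theorem d3_minimal_puncture_constraint (M : Matrix (Fin 6) (Fin 6) ℂ)
    (hM : M.transpose * J6 + J6 * M = 0) :
    ∃ a : ℂ,
      ((higgsNum M).charpoly.coeff 4).coeff 0 = 0 ∧
      ((higgsNum M).charpoly.coeff 4).coeff 1 = 2 * a ∧
      ((higgsNum M).charpoly.coeff 2).coeff 0 = 0 ∧
      ((higgsNum M).charpoly.coeff 2).coeff 1 = 0 ∧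
      ((higgsNum M).charpoly.coeff 2).coeff 2 = a ^ 2 ∧
      ((higgsNum M).charpoly.coeff 2).coeff 2 =
        (1 / 4 : ℂ) * (((higgsNum M).charpoly.coeff 4).coeff 1) ^ 2 := by
  have h40 := congrFun (congrFun hM 4) 0
  have h44 := congrFun (congrFun hM 4) 4
  simp [Matrix.add_apply, Matrix.mul_apply,
    Matrix.transpose_apply, J6, Fin.sum_univ_six, Matrix.zero_apply] at h40 h44
  norm_num [show ((0:Fin 6):ℕ) = 0 from rfl, show ((1:Fin 6):ℕ) = 1 from rfl,
    show ((2:Fin 6):ℕ) = 2 from rfl, show ((3:Fin 6):ℕ) = 3 from rfl,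
    show ((4:Fin 6):ℕ) = 4 from rfl, show ((5:Fin 6):ℕ) = 5 from rfl] at h40 h44
  -- h40 : M 3 4 + M 1 0 = 0 (or similar), h44 : M 1 4 = 0 (or 2 * M 1 4 = 0)
  obtain ⟨hF0, hF1, hF2⟩ := Fdet_coeffs M
  have key : ∀ k l : ℕ, ((higgsNum M).charpoly.coeff k).coeff l = ((Fdet M).coeff l).coeff k := by
    intro k l
    rw [← PhiSwap_coeff, Phi_charpoly]
  have hs : Matrix.trace (Xmin12 * M) = 2 * M 1 0 := by
    rw [traceXM]
    linear_combination -h40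
  have hc : Matrix.trace (Xmin12 * M * (Xmin12 * M)) = 2 * (M 1 0)^2 := by
    rw [traceXMXM]
    linear_combination (M 3 4 - M 1 0) * h40 - 2 * (M 3 0) * h44
  have e41 : ((higgsNum M).charpoly.coeff 4).coeff 1 = -(2 * M 1 0) := by
    rw [key 4 1, hF1, hs]
    simp [coeff_sub, coeff_neg, mul_assoc, coeff_C_mul, coeff_X_pow]
  have e22 : ((higgsNum M).charpoly.coeff 2).coeff 2 = (M 1 0)^2 := by
    have h := congrArg (fun q => q.coeff 2) hF2
    simp only [coeff_add, coeff_C_mul, coeff_X_pow] at h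
    rw [show ((2 : Polynomial ℂ) * (Fdet M).coeff 2).coeff 2
        = 2 * ((Fdet M).coeff 2).coeff 2 from by
      rw [show (2 : Polynomial ℂ) = C 2 from (map_ofNat C 2).symm, coeff_C_mul]] at h
    rw [key 2 2]
    rw [hs, hc] at h
    simp at h
    linear_combination h / 2
  refine ⟨-(M 1 0), ?_, ?_, ?_, ?_, ?_, ?_⟩
  · rw [key 4 0, hF0]
    simp [coeff_X_pow]
  · rw [e41]; ring
  · rw [key 2 0, hF0]
    simp [coeff_X_pow]
  · rw [key 2 1, hF1]
    simp [coeff_sub, coeff_neg, coeff_C_mul, coeff_X_pow]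
  · rw [e22]; ring
  · rw [e22, e41]; ring
end

section
/- Row D-collapse terminates: starting from any finite weakly decreasing sequence of positive integers (a Young diagram given by row lengths), the process of repeatedly removing a box from the last even-length row occurring with odd multiplicity and appending it to the next available row so as to preserve the Young-diagram (weakly decreasing) condition terminates after finitely many steps in a sequence whose multiset of values has every even value occurring with even multiplicity. -/
/-- A Young diagram, given by its weakly decreasing list of positive row lengths. -/
def IsYoung (l : List ℕ) : Prop := l.Pairwise (· ≥ ·) ∧ ∀ x ∈ l, 0 < x

/-- A D-partition: every even part occurs with even multiplicity. -/
def IsDPartition (l : List ℕ) : Prop := ∀ v, Even v → Even (l.count v)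

/-- One step of row D-collapse: take the largest even value `v` occurring with odd
multiplicity, remove a box from its last row (row `i`), and add it to a lower row
`j > i` (or append a new row of length 1) so that the result is again weakly
decreasing. -/
def DCollapseStep (l l' : List ℕ) : Prop :=
  ∃ v i, Even v ∧ Odd (l.count v) ∧
    (∀ w, Even w → Odd (l.count w) → w ≤ v) ∧
    i < l.length ∧ l.getD i 0 = v ∧
    (∀ k, i < k → k < l.length → l.getD k 0 ≠ v) ∧
    ((∃ j, i < j ∧ j < l.length ∧
        l' = (l.set i (v - 1)).set j (l.getD j 0 + 1)) ∨
      l' = l.set i (v - 1) ++ [1]) ∧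
    l'.Pairwise (· ≥ ·)


def sumsq (l : List ℕ) : ℕ := (l.map (· ^ 2)).sum


lemma sumsq_set : ∀ (l : List ℕ) (i : ℕ), i < l.length → ∀ a : ℕ,
    sumsq (l.set i a) + (l.getD i 0) ^ 2 = sumsq l + a ^ 2
  | [], i, hi, a => by simp at hi
  | x :: xs, 0, _, a => by simp [sumsq]; ring
  | x :: xs, (i+1), hi, a => by
      simp only [List.set, sumsq, List.map_cons, List.sum_cons, List.getD_cons_succ]
      have := sumsq_set xs i (by simpa using hi) a
      simp only [sumsq] at this
      omega

lemma getD_set_self (l : List ℕ) (i : ℕ) (hi : i < l.length) (a : ℕ) :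
    (l.set i a).getD i 0 = a := by
  rw [List.getD_eq_getElem _ 0 (by simpa using hi)]; simp [List.getElem_set]

lemma getD_set_other (l : List ℕ) (i j : ℕ) (hj : j < l.length) (hij : i ≠ j) (a : ℕ) :
    (l.set i a).getD j 0 = l.getD j 0 := by
  rw [List.getD_eq_getElem _ 0 (by simpa using hj), List.getD_eq_getElem _ 0 hj]
  simp [List.getElem_set, hij]

lemma sorted_getD_le (l : List ℕ) (h : l.Pairwise (· ≥ ·)) {i j : ℕ}
    (hij : i < j) (hj : j < l.length) : l.getD j 0 ≤ l.getD i 0 := by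
  rw [List.getD_eq_getElem l 0 (lt_trans hij hj), List.getD_eq_getElem l 0 hj]
  exact List.pairwise_iff_getElem.mp h i j (lt_trans hij hj) hj hij

lemma sorted_of_getD (l : List ℕ)
    (h : ∀ a b, a < b → b < l.length → l.getD b 0 ≤ l.getD a 0) :
    l.Pairwise (· ≥ ·) := by
  rw [List.pairwise_iff_getElem]
  intro a b ha hb hab
  have := h a b hab hb
  rwa [List.getD_eq_getElem l 0 ha, List.getD_eq_getElem l 0 hb] at this

lemma step_key (l l' : List ℕ) (hpos : ∀ x ∈ l, 0 < x) (h : DCollapseStep l l') :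
    IsYoung l' ∧ sumsq l' < sumsq l := by
  obtain ⟨v, i, hv, hcount, hmax, hi, hgi, hlast, hcase, hsort⟩ := h
  have hvl : v ∈ l := by
    have : 0 < l.count v := hcount.pos
    exact List.count_pos_iff.mp this
  have hv2 : 2 ≤ v := by
    have h1 := hpos v hvl
    have h2 := hv.two_dvd
    omega
  have h1 := sumsq_set l i hi (v - 1)
  rw [hgi] at h1
  rcases hcase with ⟨j, hij, hj, rfl⟩ | rfl
  · set w := l.getD j 0 with hw
    have hjlen : j < (l.set i (v-1)).length := by simpa using hj
    have h2 := sumsq_set (l.set i (v-1)) j hjlen (w + 1)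
    rw [getD_set_other l i j hj (by omega)] at h2
    have hgdi : ((l.set i (v-1)).set j (w+1)).getD i 0 = v - 1 := by
      rw [getD_set_other _ j i (by simpa using hi) (by omega)]
      exact getD_set_self l i hi _
    have hgdj : ((l.set i (v-1)).set j (w+1)).getD j 0 = w + 1 :=
      getD_set_self _ j hjlen _
    have hle : w + 1 ≤ v - 1 := by
      have := sorted_getD_le _ hsort hij (by simpa using hj)
      rw [hgdi, hgdj] at this; exact this
    constructor
    · refine ⟨hsort, fun x hx => ?_⟩
      rcases List.mem_or_eq_of_mem_set hx with hx | rfl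
      · rcases List.mem_or_eq_of_mem_set hx with hx | rfl
        · exact hpos x hx
        · omega
      · omega
    · obtain ⟨t, rfl⟩ : ∃ t, v = w + 2 + t := ⟨v - w - 2, by omega⟩
      have hv1 : w + 2 + t - 1 = w + 1 + t := by omega
      rw [hv1] at h1 h2 ⊢
      nlinarith [h1, h2]
  · have hs : sumsq (l.set i (v-1) ++ [1]) = sumsq (l.set i (v-1)) + 1 := by
      simp [sumsq]
    constructor
    · refine ⟨hsort, fun x hx => ?_⟩
      rcases List.mem_append.mp hx with hx | hx
      · rcases List.mem_or_eq_of_mem_set hx with hx | rfl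
        · exact hpos x hx
        · omega
      · simp at hx; omega
    · obtain ⟨t, rfl⟩ : ∃ t, v = 2 + t := ⟨v - 2, by omega⟩
      have hv1 : 2 + t - 1 = 1 + t := by omega
      rw [hv1] at h1 hs ⊢
      rw [hs]
      nlinarith [h1]

lemma exists_step (m : List ℕ) (hm : IsYoung m) (h : ¬ IsDPartition m) :
    ∃ m', DCollapseStep m m' := by
  obtain ⟨hsort, hpos⟩ := hm
  have hposD : ∀ k, k < m.length → 1 ≤ m.getD k 0 := by
    intro k hk
    rw [List.getD_eq_getElem m 0 hk]
    exact hpos _ (List.getElem_mem hk)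
  simp only [IsDPartition, not_forall] at h
  obtain ⟨v0, hv0, hc0⟩ := h
  rw [Nat.not_even_iff_odd] at hc0
  have memS : ∀ w, Even w → Odd (m.count w) →
      w ∈ m.toFinset.filter (fun v => Even v ∧ Odd (m.count v)) := by
    intro w hw hwc
    simp only [Finset.mem_filter, List.mem_toFinset]
    exact ⟨List.count_pos_iff.mp hwc.pos, hw, hwc⟩
  have hSne : (m.toFinset.filter (fun v => Even v ∧ Odd (m.count v))).Nonempty :=
    ⟨v0, memS v0 hv0 hc0⟩
  set v := (m.toFinset.filter (fun v => Even v ∧ Odd (m.count v))).max' hSne with hvdef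
  have hvS := (m.toFinset.filter (fun v => Even v ∧ Odd (m.count v))).max'_mem hSne
  rw [← hvdef] at hvS
  simp only [Finset.mem_filter, List.mem_toFinset] at hvS
  obtain ⟨hvm, hve, hvc⟩ := hvS
  have hmax : ∀ w, Even w → Odd (m.count w) → w ≤ v :=
    fun w hw hwc => Finset.le_max' _ w (memS w hw hwc)
  have hv2 : 2 ≤ v := by
    have := hpos v hvm
    have := hve.two_dvd
    omega
  -- last index with value v
  have hIne : ((Finset.range m.length).filter (fun k => m.getD k 0 = v)).Nonempty := by
    obtain ⟨k, hk, hget⟩ := List.mem_iff_getElem.mp hvm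
    exact ⟨k, by simp [Finset.mem_filter, Finset.mem_range, hk,
      List.getD_eq_getElem m 0 hk, hget]⟩
  set i := ((Finset.range m.length).filter (fun k => m.getD k 0 = v)).max' hIne with hidef
  have hiS := ((Finset.range m.length).filter (fun k => m.getD k 0 = v)).max'_mem hIne
  rw [← hidef] at hiS
  simp only [Finset.mem_filter, Finset.mem_range] at hiS
  obtain ⟨hi, hgi⟩ := hiS
  have hlast : ∀ k, i < k → k < m.length → m.getD k 0 ≠ v := by
    intro k hik hk hkv
    have : k ≤ i := Finset.le_max' _ k (by
      simp only [Finset.mem_filter, Finset.mem_range]; exact ⟨hk, hkv⟩)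
    omega
  have hafter : ∀ k, i < k → k < m.length → m.getD k 0 ≤ v - 1 := by
    intro k hik hk
    have h1 := sorted_getD_le m hsort hik hk
    have h2 := hlast k hik hk
    omega
  by_cases hK : ((Finset.range m.length).filter
      (fun k => i < k ∧ m.getD k 0 ≤ v - 2)).Nonempty
  · -- internal move
    set j := ((Finset.range m.length).filter
      (fun k => i < k ∧ m.getD k 0 ≤ v - 2)).min' hK with hjdef
    have hjS := ((Finset.range m.length).filter
      (fun k => i < k ∧ m.getD k 0 ≤ v - 2)).min'_mem hK
    rw [← hjdef] at hjS
    simp only [Finset.mem_filter, Finset.mem_range] at hjS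
    obtain ⟨hj, hij, hwv⟩ := hjS
    set w := m.getD j 0 with hwdef
    have hbetween : ∀ k, i < k → k < j → m.getD k 0 = v - 1 := by
      intro k hik hkj
      have hk : k < m.length := lt_trans hkj hj
      have h1 := hafter k hik hk
      by_contra hne
      have hk2 : m.getD k 0 ≤ v - 2 := by omega
      have : j ≤ k := Finset.min'_le _ k (by
        simp only [Finset.mem_filter, Finset.mem_range]; exact ⟨hk, hik, hk2⟩)
      omega
    refine ⟨_, v, i, hve, hvc, hmax, hi, hgi, hlast,
      Or.inl ⟨j, hij, hj, rfl⟩, ?_⟩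
    -- sortedness
    apply sorted_of_getD
    intro a b hab hb
    have hblen : b < m.length := by simpa using hb
    have halen : a < m.length := lt_trans hab hblen
    have hilen : i < (m.set i (v-1)).length := by simpa using hi
    have hjlen : j < (m.set i (v-1)).length := by simpa using hj
    have gd : ∀ k, k < m.length →
        ((m.set i (v-1)).set j (w+1)).getD k 0 =
          if k = j then w + 1 else if k = i then v - 1 else m.getD k 0 := by
      intro k hk
      by_cases hkj : k = j
      · subst hkj; simp only [if_pos rfl]
        exact getD_set_self _ _ (by simpa using hk) _
      · rw [getD_set_other _ j k (by simpa using hk) (Ne.symm hkj), if_neg hkj]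
        by_cases hki : k = i
        · rw [if_pos hki, hki]
          exact getD_set_self m i hi _
        · rw [if_neg hki]
          exact getD_set_other m i k hk (Ne.symm hki) _
    rw [gd a halen, gd b hblen]
    have f1 : m.getD b 0 ≤ m.getD a 0 := sorted_getD_le m hsort hab hblen
    have f2 : a ≤ i ∨ m.getD a 0 ≤ v - 1 := by
      rcases le_or_gt a i with h | h
      · exact Or.inl h
      · exact Or.inr (hafter a h halen)
    have f3 : b ≤ i ∨ m.getD b 0 ≤ v - 1 := by
      rcases le_or_gt b i with h | h
      · exact Or.inl h
      · exact Or.inr (hafter b h hblen)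
    have f4 : i ≤ a ∨ v ≤ m.getD a 0 := by
      rcases le_or_gt i a with h | h
      · exact Or.inl h
      · refine Or.inr ?_
        have := sorted_getD_le m hsort h hi
        omega
    have f5 : a ≤ i ∨ j ≤ a ∨ m.getD a 0 = v - 1 := by
      rcases le_or_gt a i with h | h
      · exact Or.inl h
      · rcases le_or_gt j a with h2 | h2
        · exact Or.inr (Or.inl h2)
        · exact Or.inr (Or.inr (hbetween a h h2))
    have f6 : b ≤ j ∨ m.getD b 0 ≤ w := by
      rcases le_or_gt b j with h | h
      · exact Or.inl h
      · exact Or.inr (sorted_getD_le m hsort h hblen)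
    have f8 : a ≠ j ∨ m.getD a 0 = w := by
      rcases eq_or_ne a j with h | h
      · exact Or.inr (by rw [h])
      · exact Or.inl h
    have f9 : b ≠ j ∨ m.getD b 0 = w := by
      rcases eq_or_ne b j with h | h
      · exact Or.inr (by rw [h])
      · exact Or.inl h
    have f10 : a ≠ i ∨ m.getD a 0 = v := by
      rcases eq_or_ne a i with h | h
      · exact Or.inr (by rw [h, hgi])
      · exact Or.inl h
    split_ifs <;> omega
  · -- append case
    have hall : ∀ k, i < k → k < m.length → m.getD k 0 = v - 1 := by
      intro k hik hk
      have h1 := hafter k hik hk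
      by_contra hne
      exact hK ⟨k, by
        simp only [Finset.mem_filter, Finset.mem_range]
        exact ⟨hk, hik, by omega⟩⟩
    refine ⟨_, v, i, hve, hvc, hmax, hi, hgi, hlast, Or.inr rfl, ?_⟩
    apply sorted_of_getD
    intro a b hab hb
    have hlen : (m.set i (v-1) ++ [1]).length = m.length + 1 := by simp
    rw [hlen] at hb
    have gd : ∀ k, k < m.length →
        (m.set i (v-1) ++ [1]).getD k 0 = if k = i then v - 1 else m.getD k 0 := by
      intro k hk
      rw [List.getD_append _ _ 0 k (by simpa using hk)]
      by_cases hki : k = i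
      · rw [if_pos hki, hki]
        exact getD_set_self m i hi _
      · rw [if_neg hki]
        exact getD_set_other m i k hk (Ne.symm hki) _
    have gdlast : (m.set i (v-1) ++ [1]).getD m.length 0 = 1 := by
      have : (m.set i (v-1) ++ [1]).getD (m.set i (v-1)).length 0 = 1 := by
        rw [List.getD_eq_getElem _ 0 (by simp)]
        simp
      simpa using this
    rcases eq_or_lt_of_le (Nat.lt_succ_iff.mp hb) with hbm | hbm
    · -- b is the appended row
      rw [hbm, gdlast]
      have halen : a < m.length := by omega
      rw [gd a halen]
      have := hposD a halen
      split_ifs <;> omega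
    · have halen : a < m.length := lt_trans hab hbm
      rw [gd a halen, gd b hbm]
      have f1 : m.getD b 0 ≤ m.getD a 0 := sorted_getD_le m hsort hab hbm
      have f4 : i ≤ a ∨ v ≤ m.getD a 0 := by
        rcases le_or_gt i a with h | h
        · exact Or.inl h
        · refine Or.inr ?_
          have := sorted_getD_le m hsort h hi
          omega
      have f3 : b ≤ i ∨ m.getD b 0 = v - 1 := by
        rcases le_or_gt b i with h | h
        · exact Or.inl h
        · exact Or.inr (hall b h hbm)
      split_ifs <;> omega

theorem dCollapse_terminates_in_DPartition (l : List ℕ) (hl : IsYoung l) :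
    (¬ ∃ f : ℕ → List ℕ, f 0 = l ∧ ∀ n, DCollapseStep (f n) (f (n + 1))) ∧
    (∀ m, Relation.ReflTransGen DCollapseStep l m →
      (∀ m', ¬ DCollapseStep m m') → IsDPartition m) := by
  constructor
  · rintro ⟨f, hf0, hstep⟩
    have hyoung : ∀ n, IsYoung (f n) := by
      intro n
      induction n with
      | zero => rwa [hf0]
      | succ n ih => exact (step_key _ _ ih.2 (hstep n)).1
    have hdec : ∀ n, sumsq (f (n + 1)) < sumsq (f n) :=
      fun n => (step_key _ _ (hyoung n).2 (hstep n)).2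
    have hle : ∀ n, sumsq (f n) + n ≤ sumsq (f 0) := by
      intro n
      induction n with
      | zero => omega
      | succ n ih => have := hdec n; omega
    have := hle (sumsq (f 0) + 1)
    omega
  · intro m hm hstuck
    have hy : IsYoung m := by
      clear hstuck
      induction hm with
      | refl => exact hl
      | tail _ h2 ih => exact (step_key _ _ ih.2 h2).1
    by_contra hnd
    obtain ⟨m', hm'⟩ := exists_step m hy hnd
    exact hstuck m' hm'
end
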